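/- For fixed d > 0 and κ ≥ 1, the function h(u) = |min(κ·u, max(d, max(1, u))) - d| is convex on [1/κ, ∞). -/
import Mathlib


/-- The single-eigenvalue projection error `h(u) = |min (κu) (max d (max 1 u)) - d|`
is convex on `[1/κ, ∞)`. -/
theorem projection_error_convex (d κ : ℝ) (hd : 0 < d) (hκ : 1 ≤ κ) :
    ConvexOn ℝ (Set.Ici (1 / κ))
      (fun u : ℝ => |min (κ * u) (max d (max 1 u)) - d|) := by
  have hκ0 : (0:ℝ) < κ := lt_of_lt_of_le zero_lt_one hκ
  set s : Set ℝ := Set.Ici (1 / κ) with hs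
  have hconv : Convex ℝ s := convex_Ici _
  -- pointwise identity on s
  have key : ∀ u ∈ s, |min (κ * u) (max d (max 1 u)) - d|
      = max (max (d - κ * u) 0) (max (1 - d) (u - d)) := by
    intro u hu
    have hu' : 1 / κ ≤ u := hu
    have h1 : 1 ≤ κ * u := by
      rw [div_le_iff₀ hκ0] at hu'; linarith [hu']
    have hu0 : 0 < u := lt_of_lt_of_le (by positivity) hu'
    have h2 : u ≤ κ * u := by nlinarith
    rcases le_total (κ * u) d with h | h
    · -- κu ≤ d : value is d - κu
      have hmin : min (κ * u) (max d (max 1 u)) = κ * u :=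
        min_eq_left (le_trans h (le_max_left _ _))
      rw [hmin, abs_of_nonpos (by linarith)]
      have : max (max (d - κ * u) 0) (max (1 - d) (u - d)) = d - κ * u := by
        apply le_antisymm
        · exact max_le (max_le le_rfl (by linarith)) (max_le (by linarith) (by linarith))
        · exact le_max_of_le_left (le_max_left _ _)
      rw [this]; ring
    · -- d ≤ κu : value is max d (max 1 u) - d
      have hmin : min (κ * u) (max d (max 1 u)) = max d (max 1 u) :=
        min_eq_right (max_le h (max_le h1 h2))
      rw [hmin, abs_of_nonneg (by simp [sub_nonneg, le_max_left])]
      have hz : max (d - κ * u) 0 = 0 := max_eq_right (by linarith)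
      rw [hz]
      rcases le_total 1 u with h' | h' <;> rcases le_total d 1 with h'' | h'' <;>
        rcases le_total d u with h3 | h3 <;>
        simp [max_def] <;> split_ifs <;> linarith
  -- convexity of the affine-max function
  have c1 : ConvexOn ℝ s (fun u : ℝ => d - κ * u) := by
    refine ⟨hconv, fun x _ y _ a b ha hb hab => ?_⟩
    simp only [smul_eq_mul]
    exact le_of_eq (by linear_combination (-d) * hab)
  have c0 : ConvexOn ℝ s (fun _ : ℝ => (0:ℝ)) := convexOn_const _ hconv
  have c2 : ConvexOn ℝ s (fun _ : ℝ => (1 - d : ℝ)) := convexOn_const _ hconv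
  have c3 : ConvexOn ℝ s (fun u : ℝ => u - d) := by
    refine ⟨hconv, fun x _ y _ a b ha hb hab => ?_⟩
    simp only [smul_eq_mul]
    exact le_of_eq (by linear_combination d * hab)
  have ctotal : ConvexOn ℝ s
      (fun u : ℝ => max (max (d - κ * u) 0) (max (1 - d) (u - d))) :=
    (c1.sup c0).sup (c2.sup c3)
  refine ⟨hconv, fun x hx y hy a b ha hb hab => ?_⟩
  have hxy : a • x + b • y ∈ s := hconv hx hy ha hb hab
  calc |min (κ * (a • x + b • y)) (max d (max 1 (a • x + b • y))) - d|
      = max (max (d - κ * (a • x + b • y)) 0)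
          (max (1 - d) ((a • x + b • y) - d)) := key _ hxy
    _ ≤ a • max (max (d - κ * x) 0) (max (1 - d) (x - d))
        + b • max (max (d - κ * y) 0) (max (1 - d) (y - d)) :=
        ctotal.2 hx hy ha hb hab
    _ = a • |min (κ * x) (max d (max 1 x)) - d|
        + b • |min (κ * y) (max d (max 1 y)) - d| := by
        rw [key x hx, key y hy]
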